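/- If F is a semifilter on ℕ which is a universally measurable subset of the Cantor space P(ω), and h : ℕ → ℕ is finite-to-one, then {h[x] : x ∈ F} is a universally measurable subset of P(ω). -/

import Mathlib

open MeasureTheory Set

/-- Identify a subset of ℕ with a point of the Cantor space `ℕ → Bool`. -/
noncomputable def toCantor (x : Set ℕ) : ℕ → Bool :=
  fun n => @decide (n ∈ x) (Classical.dec _)

/-- A subset of a topological space is universally measurable if it is measurable with
respect to (the completion of) every σ-finite Borel measure on the space. -/
def UMSet {X : Type*} [TopologicalSpace X] (A : Set X) : Prop :=
  letI : MeasurableSpace X := borel X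
  ∀ μ : Measure X, SigmaFinite μ → NullMeasurableSet A μ

/-- A semifilter on ℕ: a nonempty proper collection of subsets of ℕ closed under supersets
and under finite changes. -/
def IsSemifilter (F : Set (Set ℕ)) : Prop :=
  F.Nonempty ∧ F ≠ Set.univ ∧ (∀ x ∈ F, ∀ y : Set ℕ, x ⊆ y → y ∈ F) ∧
    (∀ x ∈ F, ∀ y : Set ℕ, (symmDiff x y).Finite → y ∈ F)

/-- The family `{h[x] : x ∈ F}` of images of members of `F` under `h`. -/
def imgFam (h : ℕ → ℕ) (F : Set (Set ℕ)) : Set (Set ℕ) :=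
  (fun x : Set ℕ => h '' x) '' F

/-- `h` is finite-to-one if every fiber is finite. -/
def FinToOne (h : ℕ → ℕ) : Prop := ∀ n : ℕ, (h ⁻¹' {n}).Finite

/-- Inverse of `toCantor`. -/
def ofCantor (f : ℕ → Bool) : Set ℕ := {n | f n = true}

lemma ofCantor_toCantor (x : Set ℕ) : ofCantor (toCantor x) = x := by
  ext n; simp [ofCantor, toCantor]

lemma toCantor_ofCantor (f : ℕ → Bool) : toCantor (ofCantor f) = f := by
  funext n; simp [ofCantor, toCantor]; by_cases hf : f n = true <;> simp [hf]

lemma mem_toCantor_image (S : Set (Set ℕ)) (f : ℕ → Bool) :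
    f ∈ toCantor '' S ↔ ofCantor f ∈ S := by
  constructor
  · rintro ⟨x, hx, rfl⟩; rwa [ofCantor_toCantor]
  · intro hf; exact ⟨ofCantor f, hf, toCantor_ofCantor f⟩

/-- Characterization of `imgFam` for a semifilter. -/
lemma imgFam_eq (h : ℕ → ℕ) (F : Set (Set ℕ)) (hF : IsSemifilter F) :
    imgFam h F = {y | y ⊆ Set.range h ∧ h ⁻¹' y ∈ F} := by
  ext y
  constructor
  · rintro ⟨x, hx, rfl⟩
    refine ⟨image_subset_range h x, hF.2.2.1 x hx _ ?_⟩
    exact subset_preimage_image h x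
  · rintro ⟨hy, hpre⟩
    refine ⟨h ⁻¹' y, hpre, ?_⟩
    exact image_preimage_eq_of_subset hy

/-- If `F` is a universally measurable semifilter and `h` is finite-to-one, then
`{h[x] : x ∈ F}` is universally measurable. -/
theorem stmt_15 (F : Set (Set ℕ)) (hF : IsSemifilter F)
    (hUM : UMSet (toCantor '' F)) (h : ℕ → ℕ) (hfto : FinToOne h) :
    UMSet (toCantor '' imgFam h F) := by
  letI : MeasurableSpace (ℕ → Bool) := borel _
  haveI : BorelSpace (ℕ → Bool) := ⟨rfl⟩
  intro μ hσ
  -- the continuous map Φ f = f ∘ h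
  set Φ : (ℕ → Bool) → (ℕ → Bool) := fun f n => f (h n) with hΦdef
  have hΦcont : Continuous Φ := continuous_pi fun n => continuous_apply (h n)
  have hΦ : Measurable Φ := hΦcont.measurable
  -- the closed set C of functions vanishing off the range of h
  set C : Set (ℕ → Bool) := {f | ∀ n, n ∉ Set.range h → f n = false} with hCdef
  have hCmeas : MeasurableSet C := by
    have hCeq : C = ⋂ n ∈ {n | n ∉ Set.range h}, {f : ℕ → Bool | f n = false} := by
      ext f; simp [hCdef]
    have hCcl : IsClosed C := by
      rw [hCeq]
      exact isClosed_biInter fun n _ => isClosed_eq (continuous_apply n) continuous_const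
    exact hCcl.measurableSet
  -- rewrite the target set
  have hset : toCantor '' imgFam h F = (Φ ⁻¹' (toCantor '' F)) ∩ C := by
    ext f
    rw [mem_toCantor_image, imgFam_eq h F hF]
    simp only [mem_setOf_eq, mem_inter_iff, mem_preimage, mem_toCantor_image]
    have h1 : ofCantor (Φ f) = h ⁻¹' (ofCantor f) := rfl
    have h2 : (ofCantor f ⊆ Set.range h) ↔ f ∈ C := by
      constructor
      · intro hs n hn
        by_contra hfn
        exact hn (hs (by simpa [ofCantor] using hfn))
      · intro hf n hn
        by_contra hr
        simp [hf n hr, ofCantor] at hn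
    rw [h1, h2]
    tauto
  rw [hset]
  -- reduce to a finite measure ν equivalent to μ
  obtain ⟨ν, hνfin, hμν, hνμ⟩ := exists_isFiniteMeasure_absolutelyContinuous μ
  haveI := hνfin
  have hmap : SigmaFinite (Measure.map Φ ν) := by
    haveI : IsFiniteMeasure (Measure.map Φ ν) := by
      constructor
      rw [Measure.map_apply hΦ MeasurableSet.univ]
      exact measure_lt_top ν _
    infer_instance
  have hT : NullMeasurableSet (toCantor '' F) (Measure.map Φ ν) := hUM _ hmap
  have hqmp : Measure.QuasiMeasurePreserving Φ ν (Measure.map Φ ν) :=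
    ⟨hΦ, Measure.AbsolutelyContinuous.rfl⟩
  have hpre : NullMeasurableSet (Φ ⁻¹' (toCantor '' F)) ν := hT.preimage hqmp
  have hpreμ : NullMeasurableSet (Φ ⁻¹' (toCantor '' F)) μ := hpre.mono_ac hμν
  exact hpreμ.inter hCmeas.nullMeasurableSet
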